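/- Suppose {f_j} is an X_d*-frame for X* and Q ∈ B(X). Then {Q f_j} is an X_d*-frame for X* if and only if the adjoint Q* is bounded below (there exists γ > 0 with ‖Q*f*‖ ≥ γ‖f*‖ for all f* ∈ X*). -/

import Mathlib

open scoped ComplexConjugate
open Filter Topology

/-- A compatible semi-inner product on a complex normed space. -/
structure CompatSIP (X : Type*) [NormedAddCommGroup X] [NormedSpace ℂ X] where
  sip : X → X → ℂ
  add_left : ∀ f g h : X, sip (f + g) h = sip f h + sip g h
  smul_left : ∀ (a : ℂ) (f g : X), sip (a • f) g = a * sip f g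
  smul_right : ∀ (a : ℂ) (f g : X), sip f (a • g) = conj a * sip f g
  compat : ∀ f : X, sip f f = (‖f‖ : ℂ) ^ 2
  cauchy_schwarz : ∀ f g : X, ‖sip f g‖ ≤ ‖f‖ * ‖g‖

/-- The dual element `f*` of `f`, i.e. the bounded functional `g ↦ [g, f]`. -/
noncomputable def CompatSIP.dual {X : Type*} [NormedAddCommGroup X] [NormedSpace ℂ X]
    (S : CompatSIP X) (f : X) : StrongDual ℂ X :=
  LinearMap.mkContinuous
    { toFun := fun g => S.sip g f
      map_add' := fun g h => S.add_left g h f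
      map_smul' := fun a g => S.smul_left a g f }
    ‖f‖ (fun g => by
      calc ‖S.sip g f‖ ≤ ‖g‖ * ‖f‖ := S.cauchy_schwarz g f
        _ = ‖f‖ * ‖g‖ := mul_comm _ _)

/-- The Banach-space adjoint `T* : Y* → X*` of a bounded operator `T : X → Y`. -/
noncomputable def opDual {X Y : Type*} [NormedAddCommGroup X] [NormedSpace ℂ X]
    [NormedAddCommGroup Y] [NormedSpace ℂ Y] (T : X →L[ℂ] Y) :
    StrongDual ℂ Y →L[ℂ] StrongDual ℂ X :=
  LinearMap.mkContinuous
    { toFun := fun φ => φ.comp T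
      map_add' := fun φ ψ => ContinuousLinearMap.add_comp φ ψ T
      map_smul' := fun a φ => ContinuousLinearMap.smul_comp a φ T }
    ‖T‖ (fun φ => by
      calc ‖φ.comp T‖ ≤ ‖φ‖ * ‖T‖ := ContinuousLinearMap.opNorm_comp_le φ T
        _ = ‖T‖ * ‖φ‖ := mul_comm _ _)

@[simp] lemma opDual_apply {X Y : Type*} [NormedAddCommGroup X] [NormedSpace ℂ X]
    [NormedAddCommGroup Y] [NormedSpace ℂ Y] (T : X →L[ℂ] Y)
    (φ : StrongDual ℂ Y) (x : X) : opDual T φ x = φ (T x) := rfl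

/-- Convergence of the series `∑ v j` (in the Schauder/ordered sense) to `s`. -/
def SumsTo {X : Type*} [NormedAddCommGroup X] (v : ℕ → X) (s : X) : Prop :=
  Tendsto (fun n => ∑ j ∈ Finset.range n, v j) atTop (𝓝 s)

lemma CompatSIP.dual_apply {X : Type*} [NormedAddCommGroup X] [NormedSpace ℂ X]
    (S : CompatSIP X) (f g : X) : S.dual f g = S.sip g f := rfl

lemma CompatSIP.norm_dual {X : Type*} [NormedAddCommGroup X] [NormedSpace ℂ X]
    (S : CompatSIP X) (f : X) : ‖S.dual f‖ = ‖f‖ := by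
  refine le_antisymm (LinearMap.mkContinuous_norm_le _ (norm_nonneg f) _) ?_
  rcases eq_or_ne f 0 with rfl | hf
  · simp
  · have h1 : ‖S.dual f f‖ ≤ ‖S.dual f‖ * ‖f‖ := (S.dual f).le_opNorm f
    have h2 : ‖S.dual f f‖ = ‖f‖ ^ 2 := by
      rw [S.dual_apply, S.compat]
      simp [sq_abs]
    rw [h2, sq] at h1
    exact le_of_mul_le_mul_right h1 (norm_pos_iff.mpr hf)

lemma dual_ext_of_basis {Xd : Type*} [NormedAddCommGroup Xd] [NormedSpace ℂ Xd]
    (e : ℕ → Xd) (coord : ℕ → StrongDual ℂ Xd)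
    (hbasis : ∀ c : Xd, SumsTo (fun j => coord j c • e j) c)
    (F G : StrongDual ℂ Xd) (h : ∀ j, F (e j) = G (e j)) : F = G := by
  ext c
  have hF : Tendsto (fun n => F (∑ j ∈ Finset.range n, coord j c • e j)) atTop (𝓝 (F c)) :=
    (F.continuous.tendsto c).comp (hbasis c)
  have hG : Tendsto (fun n => G (∑ j ∈ Finset.range n, coord j c • e j)) atTop (𝓝 (G c)) :=
    (G.continuous.tendsto c).comp (hbasis c)
  have heq : (fun n => F (∑ j ∈ Finset.range n, coord j c • e j)) =
      (fun n => G (∑ j ∈ Finset.range n, coord j c • e j)) := by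
    funext n
    simp only [map_sum, map_smul, h]
  rw [heq] at hF
  exact tendsto_nhds_unique hF hG

/-- For an `X_d^*`-frame `{f_j}` and `Q ∈ B(X)`: `{Q f_j}` is an `X_d^*`-frame
iff `Q^*` is bounded below. -/
theorem image_frame_iff_adjoint_bounded_below {X Xd : Type*}
    [NormedAddCommGroup X] [NormedSpace ℂ X] [CompleteSpace X]
    [StrictConvexSpace ℝ X] [TopologicalSpace.SeparableSpace X]
    [NormedAddCommGroup Xd] [NormedSpace ℂ Xd] [CompleteSpace Xd]
    (S : CompatSIP X) (hsurj : Function.Surjective S.dual)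
    (e : ℕ → Xd) (coord : ℕ → StrongDual ℂ Xd)
    (hco : ∀ i j, coord i (e j) = if i = j then (1 : ℂ) else 0)
    (hbasis : ∀ c : Xd, SumsTo (fun j => coord j c • e j) c)
    (fj : ℕ → X) (Q : X →L[ℂ] X)
    (hframe : ∃ A B : ℝ, 0 < A ∧ 0 < B ∧ ∀ f : X, ∃ F : StrongDual ℂ Xd,
      (∀ j, F (e j) = S.sip (fj j) f) ∧ A * ‖f‖ ≤ ‖F‖ ∧ ‖F‖ ≤ B * ‖f‖) :
    (∃ A B : ℝ, 0 < A ∧ 0 < B ∧ ∀ f : X, ∃ F : StrongDual ℂ Xd,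
      (∀ j, F (e j) = S.sip (Q (fj j)) f) ∧ A * ‖f‖ ≤ ‖F‖ ∧ ‖F‖ ≤ B * ‖f‖) ↔
    (∃ γ : ℝ, 0 < γ ∧ ∀ φ : StrongDual ℂ X, γ * ‖φ‖ ≤ ‖opDual Q φ‖) := by
  obtain ⟨A0, B0, hA0, hB0, hfr⟩ := hframe
  constructor
  · rintro ⟨A, B, hA, hB, hfrQ⟩
    refine ⟨A / B0, div_pos hA hB0, fun φ => ?_⟩
    obtain ⟨f, rfl⟩ := hsurj φ
    obtain ⟨g, hg⟩ := hsurj (opDual Q (S.dual f))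
    have hsg : ∀ x : X, S.sip x g = S.sip (Q x) f := by
      intro x
      have := congrArg (fun ψ : StrongDual ℂ X => ψ x) hg
      simpa [CompatSIP.dual_apply] using this
    obtain ⟨F0, hF0e, _, hF0B⟩ := hfr g
    obtain ⟨F, hFe, hFA, _⟩ := hfrQ f
    have hFF0 : F = F0 := by
      refine dual_ext_of_basis e coord hbasis F F0 fun j => ?_
      rw [hFe j, hF0e j, hsg]
    have hchain : A * ‖f‖ ≤ B0 * ‖g‖ := by
      calc A * ‖f‖ ≤ ‖F‖ := hFA
        _ = ‖F0‖ := by rw [hFF0]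
        _ ≤ B0 * ‖g‖ := hF0B
    have hng : ‖g‖ = ‖opDual Q (S.dual f)‖ := by rw [← S.norm_dual g, hg]
    rw [S.norm_dual f, div_mul_eq_mul_div, div_le_iff₀ hB0, ← hng, mul_comm ‖g‖ B0]
    exact hchain
  · rintro ⟨γ, hγ, hlb⟩
    refine ⟨A0 * γ, B0 * (‖opDual Q‖ + 1), mul_pos hA0 hγ,
      mul_pos hB0 (by positivity), fun f => ?_⟩
    obtain ⟨g, hg⟩ := hsurj (opDual Q (S.dual f))
    have hsg : ∀ x : X, S.sip x g = S.sip (Q x) f := by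
      intro x
      have := congrArg (fun ψ : StrongDual ℂ X => ψ x) hg
      simpa [CompatSIP.dual_apply] using this
    obtain ⟨F, hFe, hFA, hFB⟩ := hfr g
    refine ⟨F, fun j => by rw [hFe j, hsg], ?_, ?_⟩
    · have h1 : γ * ‖f‖ ≤ ‖g‖ := by
        have := hlb (S.dual f)
        rw [S.norm_dual f, ← hg, S.norm_dual g] at this
        exact this
      calc A0 * γ * ‖f‖ = A0 * (γ * ‖f‖) := by ring
        _ ≤ A0 * ‖g‖ := by exact mul_le_mul_of_nonneg_left h1 hA0.le
        _ ≤ ‖F‖ := hFA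
    · have h2 : ‖g‖ ≤ (‖opDual Q‖ + 1) * ‖f‖ := by
        have := (opDual Q).le_opNorm (S.dual f)
        rw [S.norm_dual f, ← hg, S.norm_dual g] at this
        nlinarith [norm_nonneg f]
      calc ‖F‖ ≤ B0 * ‖g‖ := hFB
        _ ≤ B0 * ((‖opDual Q‖ + 1) * ‖f‖) := mul_le_mul_of_nonneg_left h2 hB0.le
        _ = B0 * (‖opDual Q‖ + 1) * ‖f‖ := by ring
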